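/- Let B(U) be the algebra built on the exterior algebra without unit of an n-dimensional vector space U, with product equal to the wedge product except that b₀b₀ = b₀ for the fixed basis vector b₀ of ∧ⁿU, as in the context. Then the set of algebra automorphisms of B(U) mapping U = ∧¹U onto itself equals SL(U) (acting via exterior powers): {σ ∈ Aut(B(U)) : σ(U) = U} = SL(U). -/

import Mathlib

open ExteriorAlgebra

private lemma aux_alt {F U N : Type*} [Field F] [AddCommGroup U] [Module F U]
    [AddCommGroup N] [Module F N] {n : ℕ} (e : Module.Basis (Fin n) F U)
    (f : U [⋀^Fin n]→ₗ[F] N) (v : Fin n → U) : f v = e.det v • f e := by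
  have h : f = (LinearMap.toSpanSingleton F N (f e)).compAlternatingMap e.det := by
    refine Module.Basis.ext_alternating e fun w hw => ?_
    have hb : Function.Bijective w := (Finite.injective_iff_bijective).mp hw
    let σ : Equiv.Perm (Fin n) := Equiv.ofBijective w hb
    have h1 : (fun i => e (w i)) = ⇑e ∘ ⇑σ := rfl
    rw [h1, f.map_perm ⇑e σ]
    have h2 : e.det (⇑e ∘ ⇑σ) = Equiv.Perm.sign σ • e.det ⇑e := e.det.map_perm ⇑e σ
    simp [h2, Module.Basis.det_self, Units.smul_def, LinearMap.toSpanSingleton_apply, Int.cast_smul_eq_zsmul]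
  conv_lhs => rw [h]
  simp [LinearMap.toSpanSingleton_apply]

private lemma aux_mem {F U : Type*} [Field F] [AddCommGroup U] [Module F U]
    (g : U →ₗ[F] U) (i : ℕ) {x : ExteriorAlgebra F U} (hx : x ∈ ⋀[F]^i U) :
    ExteriorAlgebra.map g x ∈ ⋀[F]^i U := by
  rw [← ιMulti_span_fixedDegree] at hx
  induction hx using Submodule.span_induction with
  | mem y hy =>
      obtain ⟨v, rfl⟩ := hy
      rw [map_apply_ιMulti]
      exact ιMulti_range F i ⟨g ∘ v, rfl⟩
  | zero => simp
  | add a b _ _ ha hb => rw [map_add]; exact Submodule.add_mem _ ha hb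
  | smul r a _ ha => rw [map_smul]; exact Submodule.smul_mem _ r ha

private lemma aux_top {F U : Type*} [Field F] [AddCommGroup U] [Module F U]
    [FiniteDimensional F U] {n : ℕ} (hdim : Module.finrank F U = n)
    (g : U →ₗ[F] U) {x : ExteriorAlgebra F U} (hx : x ∈ ⋀[F]^n U) :
    ExteriorAlgebra.map g x = LinearMap.det g • x := by
  let e : Module.Basis (Fin n) F U := Module.finBasisOfFinrankEq F U hdim
  rw [← ιMulti_span_fixedDegree] at hx
  induction hx using Submodule.span_induction with
  | mem y hy =>
      obtain ⟨v, rfl⟩ := hy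
      rw [map_apply_ιMulti]
      rw [aux_alt e (ιMulti F n) (g ∘ v), aux_alt e (ιMulti F n) v,
        Module.Basis.det_comp, smul_smul, mul_comm]
  | zero => simp
  | add a b _ _ ha hb => rw [map_add, ha, hb, smul_add]
  | smul r a _ ha => rw [map_smul, ha, smul_comm]

theorem stmt5 {F U B : Type*} [Field F]
    [AddCommGroup U] [Module F U] [FiniteDimensional F U]
    [AddCommGroup B] [Module F B]
    (n : ℕ) (hn : 0 < n) (hdim : Module.finrank F U = n)
    (mul : B →ₗ[F] B →ₗ[F] B)
    (ι : ∀ i : ℕ, ↥(⋀[F]^i U) →ₗ[F] B)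
    (hinj : ∀ i ∈ Finset.Icc 1 n, Function.Injective (ι i))
    (hinternal : DirectSum.IsInternal
      (fun i : ℕ => if i ∈ Finset.Icc 1 n then LinearMap.range (ι i) else ⊥))
    (b₀ : ⋀[F]^n U) (hb₀ : b₀ ≠ 0)
    (hb₀span : Submodule.span F {b₀} = (⊤ : Submodule F (⋀[F]^n U)))
    (hmul : ∀ i ∈ Finset.Icc 1 n, ∀ j ∈ Finset.Icc 1 n, ¬(i = n ∧ j = n) →
      ∀ (x : ⋀[F]^i U) (y : ⋀[F]^j U),
        mul (ι i x) (ι j y) =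
          if i + j ≤ n then
            ι (i + j) ⟨(x : ExteriorAlgebra F U) * (y : ExteriorAlgebra F U),
              by rw [ExteriorAlgebra.exteriorPower, pow_add]; exact Submodule.mul_mem_mul x.2 y.2⟩
          else 0)
    (hmultop : mul (ι n b₀) (ι n b₀) = ι n b₀) :
    {σ : B ≃ₗ[F] B |
        (∀ x y : B, σ (mul x y) = mul (σ x) (σ y)) ∧
        Submodule.map σ.toLinearMap (LinearMap.range (ι 1)) = LinearMap.range (ι 1)} =
    {σ : B ≃ₗ[F] B |
        ∃ g : U ≃ₗ[F] U, LinearMap.det (g : U →ₗ[F] U) = 1 ∧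
          ∀ i ∈ Finset.Icc 1 n, ∀ (x y : ⋀[F]^i U),
            ExteriorAlgebra.map (g : U →ₗ[F] U) (x : ExteriorAlgebra F U)
                = (y : ExteriorAlgebra F U) →
              σ (ι i x) = ι i y} := by
  have h1 : (1 : ℕ) ∈ Finset.Icc 1 n := Finset.mem_Icc.mpr ⟨le_refl 1, hn⟩
  have hnmem : n ∈ Finset.Icc 1 n := Finset.mem_Icc.mpr ⟨hn, le_refl n⟩
  ext σ
  simp only [Set.mem_setOf_eq]
  constructor
  · -- forward direction
    rintro ⟨hmulσ, hU⟩
    have hpow1 : (⋀[F]^1 U) = LinearMap.range (ExteriorAlgebra.ι F (M := U)) := pow_one _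
    let j1 : U →ₗ[F] ⋀[F]^1 U := (ExteriorAlgebra.ι F).codRestrict _
      (fun m => by rw [hpow1]; exact ⟨m, rfl⟩)
    have j1inj : Function.Injective j1 := by
      intro a b h
      exact ExteriorAlgebra.ι_leftInverse.injective (congrArg Subtype.val h)
    have j1surj : Function.Surjective j1 := by
      rintro ⟨x, hx⟩
      rw [hpow1] at hx
      obtain ⟨m, rfl⟩ := hx
      exact ⟨m, rfl⟩
    set k : U →ₗ[F] B := (ι 1) ∘ₗ j1 with hk
    have kinj : Function.Injective k := (hinj 1 h1).comp j1inj
    have krange : LinearMap.range k = LinearMap.range (ι 1) := by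
      rw [hk, LinearMap.range_comp, LinearMap.range_eq_top.mpr j1surj, Submodule.map_top]
    have hσk : ∀ u : U, σ (k u) ∈ LinearMap.range k := by
      intro u
      rw [krange, ← hU]
      exact Submodule.mem_map_of_mem ⟨j1 u, rfl⟩
    set gl : U →ₗ[F] U := (LinearEquiv.ofInjective k kinj).symm.toLinearMap ∘ₗ
      (σ.toLinearMap ∘ₗ k).codRestrict (LinearMap.range k) hσk with hgl
    have hkgl : ∀ u, k (gl u) = σ (k u) := by
      intro u
      show k ((LinearEquiv.ofInjective k kinj).symm ⟨σ (k u), hσk u⟩) = σ (k u)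
      exact LinearEquiv.ofInjective_symm_apply (f := k) (h := kinj) ⟨σ (k u), hσk u⟩
    have glinj : Function.Injective gl := by
      intro a b h
      have h2 : σ (k a) = σ (k b) := by rw [← hkgl, ← hkgl, h]
      exact kinj (σ.injective h2)
    have glsurj : Function.Surjective gl := by
      intro u
      have hmem : k u ∈ Submodule.map σ.toLinearMap (LinearMap.range (ι 1)) := by
        rw [hU, ← krange]; exact LinearMap.mem_range_self k u
      obtain ⟨b, hb, hσb⟩ := hmem
      rw [← krange] at hb
      obtain ⟨w, rfl⟩ := hb
      exact ⟨w, kinj (by rw [hkgl]; exact hσb)⟩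
    have key1 : ∀ (x : ExteriorAlgebra F U) (hx : x ∈ ⋀[F]^1 U),
        σ (ι 1 ⟨x, hx⟩) = ι 1 ⟨ExteriorAlgebra.map gl x, aux_mem gl 1 hx⟩ := by
      intro x hx
      have hx' := hx
      rw [hpow1] at hx'
      obtain ⟨u, hu⟩ := hx'
      have hxe : (⟨x, hx⟩ : ⋀[F]^1 U) = j1 u := Subtype.ext hu.symm
      rw [hxe]
      show σ (k u) = _
      rw [← hkgl]
      show ι 1 (j1 (gl u)) = _
      congr 1
      refine Subtype.ext ?_
      show ExteriorAlgebra.ι F (gl u) = ExteriorAlgebra.map gl x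
      rw [← hu, ExteriorAlgebra.map_apply_ι]
    have key : ∀ i, 1 ≤ i → i ≤ n → ∀ (x : ExteriorAlgebra F U) (hx : x ∈ ⋀[F]^i U),
        σ (ι i ⟨x, hx⟩) = ι i ⟨ExteriorAlgebra.map gl x, aux_mem gl i hx⟩ := by
      intro i h1i
      induction i, h1i using Nat.le_induction with
      | base => exact fun _ => key1
      | succ i h1i ih =>
        intro hin x hx
        have hin' : i ≤ n := le_trans (Nat.le_succ i) hin
        have hilt : i < n := lt_of_lt_of_le (Nat.lt_succ_self i) hin
        have hEq : (⋀[F]^(i+1) U) = (⋀[F]^i U) * (⋀[F]^1 U) := by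
          simp only [ExteriorAlgebra.exteriorPower]
          rw [pow_succ, pow_one]
        have hx' : x ∈ (⋀[F]^i U) * (⋀[F]^1 U) := hEq ▸ hx
        revert hx
        refine Submodule.mul_induction_on'
          (C := fun r _ => ∀ (hmem : r ∈ ⋀[F]^(i+1) U),
            σ (ι (i+1) ⟨r, hmem⟩) = ι (i+1) ⟨ExteriorAlgebra.map gl r, aux_mem gl _ hmem⟩)
          ?_ ?_ hx'
        · intro a ha b hb hmem
          have hne : ¬(i = n ∧ 1 = n) := fun h => absurd h.1 (Nat.ne_of_lt hilt)
          have hiI : i ∈ Finset.Icc 1 n := Finset.mem_Icc.mpr ⟨h1i, hin'⟩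
          have hmm := hmul i hiI 1 h1 hne ⟨a, ha⟩ ⟨b, hb⟩
          rw [if_pos hin] at hmm
          have step1 : σ (ι (i+1) ⟨a * b, hmem⟩)
              = σ (mul (ι i ⟨a, ha⟩) (ι 1 ⟨b, hb⟩)) := congrArg σ hmm.symm
          rw [step1, hmulσ, ih hin' a ha, key1 b hb,
            hmul i hiI 1 h1 hne ⟨ExteriorAlgebra.map gl a, aux_mem gl i ha⟩
              ⟨ExteriorAlgebra.map gl b, aux_mem gl 1 hb⟩, if_pos hin]
          congr 1
          exact Subtype.ext (map_mul (ExteriorAlgebra.map gl) a b).symm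
        · intro p hp q hq cp cq hmem
          have hpm : p ∈ ⋀[F]^(i+1) U := hEq ▸ hp
          have hqm : q ∈ ⋀[F]^(i+1) U := hEq ▸ hq
          have hsplit : (⟨p + q, hmem⟩ : ⋀[F]^(i+1) U) = ⟨p, hpm⟩ + ⟨q, hqm⟩ := rfl
          rw [hsplit, map_add (ι (i+1)), map_add σ, cp hpm, cq hqm, ← map_add (ι (i+1))]
          congr 1
          exact Subtype.ext (map_add (ExteriorAlgebra.map gl) p q).symm
    have hb0' : σ (ι n b₀) = ι n ⟨ExteriorAlgebra.map gl (b₀ : ExteriorAlgebra F U),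
        aux_mem gl n b₀.2⟩ := key n hn le_rfl (b₀ : ExteriorAlgebra F U) b₀.2
    have hv : ι n b₀ ≠ 0 := fun h => hb₀ ((hinj n hnmem) (h.trans (map_zero (ι n)).symm))
    set d := LinearMap.det gl with hd
    have h2 : σ (ι n b₀) = d • ι n b₀ := by
      rw [hb0']
      have : (⟨ExteriorAlgebra.map gl (b₀ : ExteriorAlgebra F U), aux_mem gl n b₀.2⟩ :
          ⋀[F]^n U) = d • b₀ := Subtype.ext (by
            show ExteriorAlgebra.map gl (b₀ : ExteriorAlgebra F U)
              = ((d • b₀ : ⋀[F]^n U) : ExteriorAlgebra F U)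
            rw [aux_top hdim gl b₀.2]; rfl)
      rw [this, map_smul]
    have h3 : σ (ι n b₀) = (d * d) • ι n b₀ := by
      conv_lhs => rw [← hmultop]
      rw [hmulσ, h2]
      simp only [map_smul, LinearMap.smul_apply, smul_smul, hmultop]
    have hdd : d = d * d := smul_left_injective F hv (h2.symm.trans h3)
    have hdne : d ≠ 0 := by
      have := (LinearEquiv.ofBijective gl ⟨glinj, glsurj⟩).isUnit_det'
      exact IsUnit.ne_zero this
    have hdet1 : d = 1 := by
      have h4 : d * 1 = d * d := by rw [mul_one]; exact hdd
      exact (mul_left_cancel₀ hdne h4).symm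
    refine ⟨LinearEquiv.ofBijective gl ⟨glinj, glsurj⟩, hdet1, ?_⟩
    intro i hi x y hxy
    have hIcc := Finset.mem_Icc.mp hi
    have hkey := key i hIcc.1 hIcc.2 (x : ExteriorAlgebra F U) x.2
    exact hkey.trans (congrArg (ι i) (Subtype.ext hxy))
  · -- backward direction
    rintro ⟨g, hdet, hg⟩
    have hσι : ∀ i ∈ Finset.Icc 1 n, ∀ x : ⋀[F]^i U,
        σ (ι i x) = ι i ⟨ExteriorAlgebra.map (g : U →ₗ[F] U) (x : ExteriorAlgebra F U),
          aux_mem _ i x.2⟩ :=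
      fun i hi x => hg i hi x _ rfl
    have hb0map : ExteriorAlgebra.map (g : U →ₗ[F] U) (b₀ : ExteriorAlgebra F U)
        = (b₀ : ExteriorAlgebra F U) := by
      rw [aux_top hdim _ b₀.2, hdet, one_smul]
    have hσb0 : σ (ι n b₀) = ι n b₀ := by
      rw [hσι n hnmem b₀]
      congr 1
      exact Subtype.ext hb0map
    have main : ∀ i ∈ Finset.Icc 1 n, ∀ j ∈ Finset.Icc 1 n, ∀ (a : ⋀[F]^i U) (b : ⋀[F]^j U),
        σ (mul (ι i a) (ι j b)) = mul (σ (ι i a)) (σ (ι j b)) := by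
      intro i hi j hj a b
      by_cases hij : i = n ∧ j = n
      · obtain ⟨rfl, rfl⟩ := hij
        obtain ⟨s, rfl⟩ := Submodule.mem_span_singleton.mp
          (hb₀span ▸ Submodule.mem_top (x := a))
        obtain ⟨t, rfl⟩ := Submodule.mem_span_singleton.mp
          (hb₀span ▸ Submodule.mem_top (x := b))
        simp only [map_smul, LinearMap.smul_apply, hmultop, hσb0]
      · by_cases hle : i + j ≤ n
        · have hij2 : i + j ∈ Finset.Icc 1 n := by
            simp only [Finset.mem_Icc] at hi hj ⊢; omega
          rw [hmul i hi j hj hij a b, if_pos hle, hσι i hi a, hσι j hj b,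
            hσι (i + j) hij2, hmul i hi j hj hij, if_pos hle]
          congr 1
          exact Subtype.ext (map_mul (ExteriorAlgebra.map (g : U →ₗ[F] U))
            (a : ExteriorAlgebra F U) (b : ExteriorAlgebra F U))
        · rw [hmul i hi j hj hij a b, if_neg hle, hσι i hi a, hσι j hj b,
            hmul i hi j hj hij, if_neg hle, map_zero]
    have hall : ∀ x y : B, σ (mul x y) = mul (σ x) (σ y) := by
      have htop := hinternal.submodule_iSup_eq_top
      intro x y
      have hx : x ∈ ⨆ i, (if i ∈ Finset.Icc 1 n then LinearMap.range (ι i) else ⊥ :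
          Submodule F B) := by rw [htop]; trivial
      refine Submodule.iSup_induction
        (motive := fun x => ∀ y : B, σ (mul x y) = mul (σ x) (σ y)) _ hx ?_ ?_ ?_ y
      · intro i a ha y
        by_cases hi : i ∈ Finset.Icc 1 n
        · rw [if_pos hi] at ha
          obtain ⟨a, rfl⟩ := ha
          have hy : y ∈ ⨆ j, (if j ∈ Finset.Icc 1 n then LinearMap.range (ι j) else ⊥ :
              Submodule F B) := by rw [htop]; trivial
          refine Submodule.iSup_induction
            (motive := fun y => σ (mul (ι i a) y) = mul (σ (ι i a)) (σ y)) _ hy ?_ ?_ ?_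
          · intro j b hb
            by_cases hj : j ∈ Finset.Icc 1 n
            · rw [if_pos hj] at hb
              obtain ⟨b, rfl⟩ := hb
              exact main i hi j hj a b
            · rw [if_neg hj] at hb
              obtain rfl : b = 0 := hb
              simp
          · simp
          · intro u v hu hv
            simp only [map_add, hu, hv]
        · rw [if_neg hi] at ha
          obtain rfl : a = 0 := ha
          simp
      · intro y; simp
      · intro u v hu hv y
        simp only [map_add, LinearMap.add_apply, hu, hv]
    refine ⟨hall, le_antisymm ?_ ?_⟩
    · rintro _ ⟨w, ⟨a, rfl⟩, rfl⟩
      exact ⟨_, (hσι 1 h1 a).symm⟩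
    · rintro _ ⟨a, rfl⟩
      refine ⟨ι 1 ⟨ExteriorAlgebra.map (g.symm : U →ₗ[F] U) (a : ExteriorAlgebra F U),
        aux_mem _ 1 a.2⟩, ⟨_, rfl⟩, ?_⟩
      refine hg 1 h1 _ a ?_
      show ExteriorAlgebra.map (g : U →ₗ[F] U)
        (ExteriorAlgebra.map (g.symm : U →ₗ[F] U) (a : ExteriorAlgebra F U)) = _
      rw [← AlgHom.comp_apply, ExteriorAlgebra.map_comp_map]
      have hcomp : (g : U →ₗ[F] U).comp (g.symm : U →ₗ[F] U) = LinearMap.id := by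
        ext u; simp
      rw [hcomp, ExteriorAlgebra.map_id]
      rfl
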